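/- Short-range $L^2$ energy estimate for a single interface: Let $C_\infty \in \mathbb{R}$ and let $f : \mathbb{R}^2 \to \mathbb{R}$ be twice differentiable with $f - C_\infty \in L^2(\mathbb{R}^2)$ and $\nabla^2 f \in L^2(\mathbb{R}^2)$. Then there is a universal constant $C$ such that $\int_{\{y \in \mathbb{R}^2 : |y| < 1\}} \int_{\mathbb{R}^2} |f(x) - C_\infty| \, \frac{|(\nabla f(x) - \nabla f(x-y)) \cdot y|}{[|y|^2 + (f(x) - f(x-y))^2]^{3/2}}\, dx\, dy \le C\, \|f - C_\infty\|_{L^2}\, \|\nabla^2 f\|_{L^2}$. -/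

import Mathlib

open MeasureTheory Filter Topology Real Set
open scoped RealInnerProductSpace ENNReal

noncomputable section

abbrev E2 := EuclideanSpace ℝ (Fin 2)

/-- The `L²(ℝ²)` norm of a function with values in a normed group. -/
def l2norm {α : Type*} [NormedAddCommGroup α] (h : E2 → α) : ℝ :=
  (∫ x : E2, ‖h x‖ ^ 2) ^ (1 / 2 : ℝ)

-- FTC bound
lemma ftc_bound (G : E2 → E2) (hG : Differentiable ℝ G) (c y : E2) :
    (‖G (c + y) - G c‖₊ : ℝ≥0∞) ≤
      (∫⁻ t in Icc (0:ℝ) 1, (‖fderiv ℝ G (c + t • y)‖₊ : ℝ≥0∞)) * ‖y‖₊ := by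
  rcases eq_or_ne y 0 with rfl | hy
  · simp
  by_cases hfin : (∫⁻ t in Icc (0:ℝ) 1, (‖fderiv ℝ G (c + t • y)‖₊ : ℝ≥0∞)) = ⊤
  · rw [hfin, ENNReal.top_mul (by simpa using hy)]; exact le_top
  set ψ : ℝ → E2 := fun t => (fderiv ℝ G (c + t • y)) y with hψ
  have hline : ∀ t : ℝ, HasDerivAt (fun s : ℝ => c + s • y) y t := by
    intro t
    simpa using ((hasDerivAt_id t).smul_const y).const_add c
  have hder : ∀ t : ℝ, HasDerivAt (fun s => G (c + s • y)) (ψ t) t := by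
    intro t
    exact (hG (c + t • y)).hasFDerivAt.comp_hasDerivAt t (hline t)
  have hm1 : Measurable fun t : ℝ => fderiv ℝ G (c + t • y) :=
    (measurable_fderiv ℝ G).comp (by fun_prop)
  have hmψ : Measurable ψ := by
    exact (ContinuousLinearMap.apply ℝ E2 y).continuous.measurable.comp hm1
  have hbound : ∀ t : ℝ, (‖ψ t‖₊ : ℝ≥0∞) ≤ (‖fderiv ℝ G (c + t • y)‖₊ : ℝ≥0∞) * ‖y‖₊ := by
    intro t
    have := (fderiv ℝ G (c + t • y)).le_opNorm y
    rw [← ENNReal.coe_mul]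
    exact_mod_cast this
  have hint : IntegrableOn ψ (Icc (0:ℝ) 1) := by
    refine ⟨hmψ.aestronglyMeasurable, ?_⟩
    show (∫⁻ t in Icc (0:ℝ) 1, (‖ψ t‖₊ : ℝ≥0∞)) < ⊤
    calc ∫⁻ t in Icc (0:ℝ) 1, (‖ψ t‖₊ : ℝ≥0∞)
        ≤ ∫⁻ t in Icc (0:ℝ) 1, (‖fderiv ℝ G (c + t • y)‖₊ : ℝ≥0∞) * ‖y‖₊ :=
          lintegral_mono fun t => hbound t
      _ = (∫⁻ t in Icc (0:ℝ) 1, (‖fderiv ℝ G (c + t • y)‖₊ : ℝ≥0∞)) * ‖y‖₊ :=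
          lintegral_mul_const' _ _ ENNReal.coe_ne_top
      _ < ⊤ := ENNReal.mul_lt_top (lt_top_iff_ne_top.2 hfin) ENNReal.coe_lt_top
  have hii : IntervalIntegrable ψ volume 0 1 := by
    rw [intervalIntegrable_iff_integrableOn_Icc_of_le zero_le_one]
    exact hint
  have hftc : ∫ t in (0:ℝ)..1, ψ t = G (c + y) - G c := by
    have := intervalIntegral.integral_eq_sub_of_hasDerivAt
      (f := fun s => G (c + s • y)) (f' := ψ) (fun t _ => hder t) hii
    simpa using this
  calc (‖G (c + y) - G c‖₊ : ℝ≥0∞) = ‖∫ t in (0:ℝ)..1, ψ t‖₊ := by rw [hftc]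
    _ = ‖∫ t in Ioc (0:ℝ) 1, ψ t‖₊ := by
        rw [intervalIntegral.integral_of_le zero_le_one]
    _ ≤ ∫⁻ t in Ioc (0:ℝ) 1, (‖ψ t‖₊ : ℝ≥0∞) := enorm_integral_le_lintegral_enorm _
    _ ≤ ∫⁻ t in Icc (0:ℝ) 1, (‖ψ t‖₊ : ℝ≥0∞) := lintegral_mono_set Ioc_subset_Icc_self
    _ ≤ ∫⁻ t in Icc (0:ℝ) 1, (‖fderiv ℝ G (c + t • y)‖₊ : ℝ≥0∞) * ‖y‖₊ :=
        lintegral_mono fun t => hbound t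
    _ = _ := lintegral_mul_const' _ _ ENNReal.coe_ne_top

lemma ball_inv_norm_ne_top :
    (∫⁻ y in Metric.ball (0:E2) 1, ENNReal.ofReal ‖y‖⁻¹) ≠ ⊤ := by
  set S : ℕ → Set E2 := fun k =>
    Metric.ball 0 ((1/2:ℝ)^k) \ Metric.ball 0 ((1/2:ℝ)^(k+1)) with hS
  have hcover : Metric.ball (0:E2) 1 ⊆ {0} ∪ ⋃ k, S k := by
    intro y hy
    rcases eq_or_ne y 0 with rfl | hy0
    · exact Or.inl rfl
    · right
      have hny : 0 < ‖y‖ := norm_pos_iff.2 hy0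
      have h1 : ‖y‖ < 1 := by simpa using mem_ball_zero_iff.1 hy
      have hex : ∃ k : ℕ, (1/2:ℝ)^(k+1) ≤ ‖y‖ := by
        obtain ⟨k, hk⟩ := exists_pow_lt_of_lt_one hny (by norm_num : (1/2:ℝ) < 1)
        refine ⟨k, le_trans ?_ hk.le⟩
        exact pow_le_pow_of_le_one (by norm_num) (by norm_num) (Nat.le_succ k)
      refine mem_iUnion.2 ⟨Nat.find hex, ?_, ?_⟩
      · rw [mem_ball_zero_iff]
        rcases Nat.eq_zero_or_pos (Nat.find hex) with h0 | hpos
        · rw [h0]; simpa using h1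
        · obtain ⟨m, hm⟩ := Nat.exists_eq_succ_of_ne_zero hpos.ne'
          have := Nat.find_min hex (by omega : m < Nat.find hex)
          rw [hm]
          exact lt_of_not_ge this
      · rw [mem_ball_zero_iff]
        exact not_lt.2 (Nat.find_spec hex)
  have hstep : ∀ k : ℕ, (∫⁻ y in S k, ENNReal.ofReal ‖y‖⁻¹)
      ≤ ENNReal.ofReal 2 * ENNReal.ofReal ((1/2:ℝ)^k) * volume (Metric.ball (0:E2) 1) := by
    intro k
    have hmeas : MeasurableSet (S k) :=
      measurableSet_ball.diff measurableSet_ball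
    have hpt : ∀ y ∈ S k, ENNReal.ofReal ‖y‖⁻¹ ≤ ENNReal.ofReal ((2:ℝ)^(k+1)) := by
      intro y hyk
      apply ENNReal.ofReal_le_ofReal
      have hlb : (1/2:ℝ)^(k+1) ≤ ‖y‖ := by
        have := hyk.2
        rw [mem_ball_zero_iff, not_lt] at this
        exact this
      have hpos : (0:ℝ) < (1/2:ℝ)^(k+1) := by positivity
      calc ‖y‖⁻¹ ≤ ((1/2:ℝ)^(k+1))⁻¹ := inv_anti₀ hpos hlb
        _ = (2:ℝ)^(k+1) := by rw [← inv_pow]; norm_num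
    calc (∫⁻ y in S k, ENNReal.ofReal ‖y‖⁻¹)
        ≤ ∫⁻ _ in S k, ENNReal.ofReal ((2:ℝ)^(k+1)) := setLIntegral_mono' hmeas hpt
      _ = ENNReal.ofReal ((2:ℝ)^(k+1)) * volume (S k) := setLIntegral_const _ _
      _ ≤ ENNReal.ofReal ((2:ℝ)^(k+1)) * volume (Metric.ball (0:E2) ((1/2:ℝ)^k)) :=
          mul_le_mul_right (measure_mono diff_subset) _
      _ = ENNReal.ofReal ((2:ℝ)^(k+1)) *
            (ENNReal.ofReal (((1/2:ℝ)^k) ^ Module.finrank ℝ E2) * volume (Metric.ball (0:E2) 1)) := by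
          rw [Measure.addHaar_ball _ _ (by positivity)]
      _ = ENNReal.ofReal 2 * ENNReal.ofReal ((1/2:ℝ)^k) * volume (Metric.ball (0:E2) 1) := by
          have hfr : Module.finrank ℝ E2 = 2 := by simp [finrank_euclideanSpace]
          have h2 : (2:ℝ)^(k+1) * ((1/2:ℝ)^k)^2 = 2 * (1/2:ℝ)^k := by
            have hk : ((2:ℝ)^k) ≠ 0 := by positivity
            field_simp [pow_succ]
            rw [pow_succ, mul_right_comm, ← mul_pow]; norm_num
          rw [hfr, ← mul_assoc, ← ENNReal.ofReal_mul (by positivity), h2,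
            ENNReal.ofReal_mul (by norm_num)]
  have hVb : volume (Metric.ball (0:E2) 1) ≠ ⊤ := measure_ball_lt_top.ne
  have hle : (∫⁻ y in Metric.ball (0:E2) 1, ENNReal.ofReal ‖y‖⁻¹)
      ≤ ∑' k, ENNReal.ofReal 2 * ENNReal.ofReal ((1/2:ℝ)^k) * volume (Metric.ball (0:E2) 1) := by
    calc (∫⁻ y in Metric.ball (0:E2) 1, ENNReal.ofReal ‖y‖⁻¹)
        ≤ ∫⁻ y in ({0} ∪ ⋃ k, S k : Set E2), ENNReal.ofReal ‖y‖⁻¹ :=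
          lintegral_mono_set hcover
      _ ≤ (∫⁻ y in ({0} : Set E2), ENNReal.ofReal ‖y‖⁻¹)
          + ∫⁻ y in (⋃ k, S k : Set E2), ENNReal.ofReal ‖y‖⁻¹ := lintegral_union_le _ _ _
      _ ≤ 0 + ∑' k, ∫⁻ y in S k, ENNReal.ofReal ‖y‖⁻¹ := by
          gcongr
          · rw [setLIntegral_measure_zero _ _ (measure_singleton 0)]
          · exact lintegral_iUnion_le _ _
      _ ≤ ∑' k, ENNReal.ofReal 2 * ENNReal.ofReal ((1/2:ℝ)^k) * volume (Metric.ball (0:E2) 1) := by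
        rw [zero_add]
        exact ENNReal.tsum_le_tsum hstep
  refine ne_top_of_le_ne_top ?_ hle
  have heq : ∑' k : ℕ, ENNReal.ofReal 2 * ENNReal.ofReal ((1/2:ℝ)^k) * volume (Metric.ball (0:E2) 1)
      = ENNReal.ofReal 2 * volume (Metric.ball (0:E2) 1) * ∑' k : ℕ, (ENNReal.ofReal (1/2:ℝ))^k := by
    rw [← ENNReal.tsum_mul_left]
    congr 1; ext k
    rw [ENNReal.ofReal_pow (by norm_num)]
    ring
  rw [heq, ENNReal.tsum_geometric]
  refine ENNReal.mul_ne_top (ENNReal.mul_ne_top ENNReal.ofReal_ne_top hVb) ?_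
  rw [Ne, ENNReal.inv_eq_top, tsub_eq_zero_iff_le, not_le]
  rw [show (1:ℝ≥0∞) = ENNReal.ofReal 1 from ENNReal.ofReal_one.symm]
  exact ENNReal.ofReal_lt_ofReal_iff_of_nonneg (by norm_num) |>.2 (by norm_num)

-- auxiliary: L² data
lemma sq_lintegral_ne_top {α : Type*} [NormedAddCommGroup α] {h : E2 → α}
    (hh : MemLp h 2 volume) : (∫⁻ x, (‖h x‖₊ : ℝ≥0∞) ^ (2:ℝ)) ≠ ⊤ := by
  have h2 := hh.2
  rw [eLpNorm_eq_lintegral_rpow_enorm_toReal two_ne_zero ENNReal.ofNat_ne_top] at h2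
  simp only [enorm_eq_nnnorm] at h2
  simp only [ENNReal.toReal_ofNat] at h2
  intro htop
  rw [htop] at h2
  simp [ENNReal.top_rpow_of_pos (by norm_num : (0:ℝ) < 1/2)] at h2

lemma ofReal_l2norm {α : Type*} [NormedAddCommGroup α] {h : E2 → α}
    (hm : AEStronglyMeasurable h volume)
    (hne : (∫⁻ x, (‖h x‖₊ : ℝ≥0∞) ^ (2:ℝ)) ≠ ⊤) :
    ENNReal.ofReal (l2norm h) = (∫⁻ x, (‖h x‖₊ : ℝ≥0∞) ^ (2:ℝ)) ^ (1/2:ℝ) := by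
  have hint : ∫ x, ‖h x‖^2 = (∫⁻ x, (‖h x‖₊ : ℝ≥0∞)^(2:ℝ)).toReal := by
    rw [integral_eq_lintegral_of_nonneg_ae (Eventually.of_forall fun x => by positivity)
      ((hm.norm.aemeasurable.pow_const 2).aestronglyMeasurable)]
    congr 1
    apply lintegral_congr
    intro x
    rw [ENNReal.ofReal_pow (norm_nonneg _), ofReal_norm_eq_enorm, enorm_eq_nnnorm,
      ← ENNReal.rpow_natCast]
    norm_num
  rw [l2norm, hint, ENNReal.toReal_rpow, ENNReal.ofReal_toReal]
  exact (ENNReal.rpow_ne_top_of_nonneg (by norm_num) hne)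

lemma l2norm_nonneg {α : Type*} [NormedAddCommGroup α] (h : E2 → α) : 0 ≤ l2norm h :=
  Real.rpow_nonneg (integral_nonneg fun x => by positivity) _

lemma lintegral_mul_le_sqrt {φ ψ : E2 → ℝ≥0∞} (hφ : AEMeasurable φ volume)
    (hψ : AEMeasurable ψ volume) :
    ∫⁻ x, φ x * ψ x ≤ (∫⁻ x, φ x ^ (2:ℝ)) ^ (1/2:ℝ) * (∫⁻ x, ψ x ^ (2:ℝ)) ^ (1/2:ℝ) := by
  have := ENNReal.lintegral_mul_le_Lp_mul_Lq volume
    Real.HolderConjugate.two_two hφ hψ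
  simpa using this

/-- **Short-range `L²` energy estimate for a single interface.**  There is a universal
constant `C` such that for every twice differentiable `f` with `f - C∞ ∈ L²` and
`∇²f ∈ L²`,
`∫_{|y|<1} ∫_{ℝ²} |f(x)-C∞| |(∇f(x)-∇f(x-y))⬝y| / [|y|²+(f(x)-f(x-y))²]^{3/2} dx dy
  ≤ C ‖f-C∞‖_{L²} ‖∇²f‖_{L²}`. -/
theorem short_range_L2_energy_estimate :
    ∃ C : ℝ, 0 < C ∧ ∀ (Cinf : ℝ) (f : E2 → ℝ),
      Differentiable ℝ f → Differentiable ℝ (fun x => gradient f x) →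
      MemLp (fun x => f x - Cinf) 2 volume →
      MemLp (fun x => fderiv ℝ (fun x => gradient f x) x) 2 volume →
      (∫⁻ y in Metric.ball (0 : E2) 1, ∫⁻ x : E2, ENNReal.ofReal
          (|f x - Cinf| * |⟪gradient f x - gradient f (x - y), y⟫| /
            (‖y‖ ^ 2 + (f x - f (x - y)) ^ 2) ^ (3 / 2 : ℝ))) ≤
        ENNReal.ofReal (C * l2norm (fun x => f x - Cinf) *
          l2norm (fun x => fderiv ℝ (fun x => gradient f x) x)) := by
  set I : ℝ≥0∞ := ∫⁻ y in Metric.ball (0:E2) 1, ENNReal.ofReal ‖y‖⁻¹ with hI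
  refine ⟨max 1 I.toReal, lt_of_lt_of_le one_pos (le_max_left _ _), ?_⟩
  intro Cinf f hf hG hg2 hH2
  set g : E2 → ℝ := fun x => f x - Cinf with hgdef
  set H : E2 → (E2 →L[ℝ] E2) := fun x => fderiv ℝ (fun x => gradient f x) x with hHdef
  have hgm : Measurable g := (hf.continuous.sub continuous_const).measurable
  have hHm : Measurable H := measurable_fderiv ℝ _
  set A : ℝ≥0∞ := ∫⁻ x, (‖g x‖₊ : ℝ≥0∞) ^ (2:ℝ) with hAdef
  set B : ℝ≥0∞ := ∫⁻ x, (‖H x‖₊ : ℝ≥0∞) ^ (2:ℝ) with hBdef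
  have hA : A ≠ ⊤ := sq_lintegral_ne_top hg2
  have hB : B ≠ ⊤ := sq_lintegral_ne_top hH2
  set K : ℝ≥0∞ := A ^ (1/2:ℝ) * B ^ (1/2:ℝ) with hKdef
  -- Cauchy-Schwarz with translation
  have hCS : ∀ v : E2, (∫⁻ x, (‖g x‖₊ : ℝ≥0∞) * ‖H (x + v)‖₊) ≤ K := by
    intro v
    have hmH2 : ∀ w : E2 → E2, True := fun _ => trivial
    have htrans : (∫⁻ x, (‖H (x + v)‖₊ : ℝ≥0∞) ^ (2:ℝ)) = B :=
      lintegral_add_right_eq_self (fun z => (‖H z‖₊ : ℝ≥0∞) ^ (2:ℝ)) v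
    calc (∫⁻ x, (‖g x‖₊ : ℝ≥0∞) * ‖H (x + v)‖₊)
        ≤ (∫⁻ x, (‖g x‖₊ : ℝ≥0∞) ^ (2:ℝ)) ^ (1/2:ℝ) *
          (∫⁻ x, (‖H (x + v)‖₊ : ℝ≥0∞) ^ (2:ℝ)) ^ (1/2:ℝ) :=
          lintegral_mul_le_sqrt hgm.nnnorm.coe_nnreal_ennreal.aemeasurable
            ((hHm.comp (measurable_id.add_const v)).nnnorm.coe_nnreal_ennreal.aemeasurable)
      _ = K := by rw [htrans]
  -- per-y inner estimate
  have hy_bound : ∀ y : E2, (∫⁻ x : E2, ENNReal.ofReal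
      (|f x - Cinf| * |⟪gradient f x - gradient f (x - y), y⟫| /
        (‖y‖ ^ 2 + (f x - f (x - y)) ^ 2) ^ (3 / 2 : ℝ)))
      ≤ ENNReal.ofReal ‖y‖⁻¹ * K := by
    intro y
    rcases eq_or_ne y 0 with rfl | hy0
    · simp [inner_zero_right]
    have hylt : (0:ℝ) < ‖y‖ := norm_pos_iff.2 hy0
    set iy : ℝ≥0∞ := ENNReal.ofReal ‖y‖⁻¹ with hiy
    set J : E2 → ℝ≥0∞ := fun x =>
      ∫⁻ t in Icc (0:ℝ) 1, (‖H (x - y + t • y)‖₊ : ℝ≥0∞) with hJ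
    -- pointwise bound
    have hpt : ∀ x : E2, ENNReal.ofReal
        (|f x - Cinf| * |⟪gradient f x - gradient f (x - y), y⟫| /
          (‖y‖ ^ 2 + (f x - f (x - y)) ^ 2) ^ (3 / 2 : ℝ))
        ≤ (‖g x‖₊ : ℝ≥0∞) * J x * iy := by
      intro x
      set Δ : E2 := gradient f x - gradient f (x - y) with hΔ
      set D : ℝ := (‖y‖ ^ 2 + (f x - f (x - y)) ^ 2) ^ (3 / 2 : ℝ) with hD
      have hcube : ‖y‖ ^ (3:ℕ) ≤ D := by
        have h1 : ((‖y‖ ^ 2 : ℝ)) ^ (3/2 : ℝ) ≤ D := by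
          apply Real.rpow_le_rpow (by positivity)
            (le_add_of_nonneg_right (sq_nonneg _)) (by norm_num)
        calc ‖y‖ ^ (3:ℕ) = (‖y‖ ^ (2:ℕ) : ℝ) ^ (3/2:ℝ) := by
              rw [← Real.rpow_natCast ‖y‖ 2, ← Real.rpow_mul (norm_nonneg y),
                ← Real.rpow_natCast ‖y‖ 3]
              norm_num
          _ ≤ D := h1
      have hDpos : (0:ℝ) < D := lt_of_lt_of_le (by positivity) hcube
      have hnum : |⟪Δ, y⟫| ≤ ‖Δ‖ * ‖y‖ := abs_real_inner_le_norm _ _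
      have hreal : |f x - Cinf| * |⟪Δ, y⟫| / D
          ≤ |g x| * ‖Δ‖ * (‖y‖⁻¹ * ‖y‖⁻¹) := by
        calc |f x - Cinf| * |⟪Δ, y⟫| / D
            ≤ |g x| * (‖Δ‖ * ‖y‖) / ‖y‖ ^ (3:ℕ) := by
              apply div_le_div₀ (by positivity)
                (mul_le_mul_of_nonneg_left hnum (abs_nonneg _)) (by positivity) hcube
          _ = |g x| * ‖Δ‖ * (‖y‖⁻¹ * ‖y‖⁻¹) := by
              field_simp
      have hofreal : ENNReal.ofReal (|g x| * ‖Δ‖ * (‖y‖⁻¹ * ‖y‖⁻¹))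
          = (‖g x‖₊ : ℝ≥0∞) * (‖Δ‖₊ : ℝ≥0∞) * (iy * iy) := by
        rw [ENNReal.ofReal_mul (by positivity), ENNReal.ofReal_mul (abs_nonneg _),
          ENNReal.ofReal_mul (by positivity), ← Real.norm_eq_abs,
          ofReal_norm_eq_enorm, ofReal_norm_eq_enorm, enorm_eq_nnnorm, enorm_eq_nnnorm]
      have hftc : (‖Δ‖₊ : ℝ≥0∞) ≤ J x * ‖y‖₊ := by
        have := ftc_bound (fun x => gradient f x) hG (x - y) y
        rw [sub_add_cancel] at this
        exact this
      have hcancel : (‖y‖₊ : ℝ≥0∞) * iy = 1 := by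
        rw [hiy, ← enorm_eq_nnnorm, ← ofReal_norm_eq_enorm, ← ENNReal.ofReal_mul (norm_nonneg _),
          mul_inv_cancel₀ hylt.ne', ENNReal.ofReal_one]
      calc ENNReal.ofReal (|f x - Cinf| * |⟪Δ, y⟫| / D)
          ≤ ENNReal.ofReal (|g x| * ‖Δ‖ * (‖y‖⁻¹ * ‖y‖⁻¹)) := ENNReal.ofReal_le_ofReal hreal
        _ = (‖g x‖₊ : ℝ≥0∞) * (‖Δ‖₊ : ℝ≥0∞) * (iy * iy) := hofreal
        _ ≤ (‖g x‖₊ : ℝ≥0∞) * (J x * ‖y‖₊) * (iy * iy) := by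
            gcongr
        _ = (‖g x‖₊ : ℝ≥0∞) * J x * iy * ((‖y‖₊ : ℝ≥0∞) * iy) := by ring
        _ = (‖g x‖₊ : ℝ≥0∞) * J x * iy := by rw [hcancel, mul_one]
    -- integrate in x
    have hswap : (∫⁻ x, (‖g x‖₊ : ℝ≥0∞) * J x) ≤ K := by
      have hum : AEMeasurable (fun p : E2 × ℝ => (‖g p.1‖₊ : ℝ≥0∞) * ‖H (p.1 - y + p.2 • y)‖₊)
          (volume.prod (volume.restrict (Icc (0:ℝ) 1))) := by
        apply Measurable.aemeasurable
        apply Measurable.fun_mul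
        · exact (hgm.comp measurable_fst).nnnorm.coe_nnreal_ennreal
        · exact (hHm.comp (by fun_prop : Measurable fun p : E2 × ℝ =>
            p.1 - y + p.2 • y)).nnnorm.coe_nnreal_ennreal
      calc (∫⁻ x, (‖g x‖₊ : ℝ≥0∞) * J x)
          = ∫⁻ x, ∫⁻ t in Icc (0:ℝ) 1, (‖g x‖₊ : ℝ≥0∞) * ‖H (x - y + t • y)‖₊ := by
            apply lintegral_congr
            intro x
            rw [hJ, lintegral_const_mul' _ _ ENNReal.coe_ne_top]
        _ = ∫⁻ t in Icc (0:ℝ) 1, ∫⁻ x, (‖g x‖₊ : ℝ≥0∞) * ‖H (x - y + t • y)‖₊ :=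
            lintegral_lintegral_swap hum
        _ ≤ ∫⁻ _ in Icc (0:ℝ) 1, K := by
            apply lintegral_mono
            intro t
            have : ∀ x : E2, x - y + t • y = x + (t • y - y) := fun x => by abel
            simp_rw [this]
            exact hCS (t • y - y)
        _ = K := by
            rw [setLIntegral_const, Real.volume_Icc]
            norm_num
    calc (∫⁻ x : E2, ENNReal.ofReal
        (|f x - Cinf| * |⟪gradient f x - gradient f (x - y), y⟫| /
          (‖y‖ ^ 2 + (f x - f (x - y)) ^ 2) ^ (3 / 2 : ℝ)))
        ≤ ∫⁻ x, (‖g x‖₊ : ℝ≥0∞) * J x * iy := lintegral_mono hpt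
      _ = (∫⁻ x, (‖g x‖₊ : ℝ≥0∞) * J x) * iy :=
          lintegral_mul_const' _ _ ENNReal.ofReal_ne_top
      _ ≤ K * iy := mul_le_mul_left hswap _
      _ = iy * K := mul_comm _ _
  -- integrate in y
  have hmain : (∫⁻ y in Metric.ball (0 : E2) 1, ∫⁻ x : E2, ENNReal.ofReal
      (|f x - Cinf| * |⟪gradient f x - gradient f (x - y), y⟫| /
        (‖y‖ ^ 2 + (f x - f (x - y)) ^ 2) ^ (3 / 2 : ℝ))) ≤ I * K := by
    calc (∫⁻ y in Metric.ball (0 : E2) 1, ∫⁻ x : E2, ENNReal.ofReal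
        (|f x - Cinf| * |⟪gradient f x - gradient f (x - y), y⟫| /
          (‖y‖ ^ 2 + (f x - f (x - y)) ^ 2) ^ (3 / 2 : ℝ)))
        ≤ ∫⁻ y in Metric.ball (0 : E2) 1, ENNReal.ofReal ‖y‖⁻¹ * K :=
          lintegral_mono fun y => hy_bound y
      _ = (∫⁻ y in Metric.ball (0 : E2) 1, ENNReal.ofReal ‖y‖⁻¹) * K :=
          lintegral_mul_const' _ _ (by
            rw [hKdef]
            exact ENNReal.mul_ne_top (ENNReal.rpow_ne_top_of_nonneg (by norm_num) hA)
              (ENNReal.rpow_ne_top_of_nonneg (by norm_num) hB))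
      _ = I * K := rfl
  refine le_trans hmain ?_
  -- final constant bookkeeping
  have hIC : I ≤ ENNReal.ofReal (max 1 I.toReal) := by
    have hIne : I ≠ ⊤ := by rw [hI]; exact ball_inv_norm_ne_top
    conv_lhs => rw [← ENNReal.ofReal_toReal hIne]
    exact ENNReal.ofReal_le_ofReal (le_max_right _ _)
  have hg2' : ENNReal.ofReal (l2norm g) = A ^ (1/2:ℝ) :=
    ofReal_l2norm hgm.aestronglyMeasurable hA
  have hH2' : ENNReal.ofReal (l2norm H) = B ^ (1/2:ℝ) :=
    ofReal_l2norm hHm.aestronglyMeasurable hB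
  calc I * K ≤ ENNReal.ofReal (max 1 I.toReal) * K := mul_le_mul_left hIC _
    _ = ENNReal.ofReal (max 1 I.toReal) * ENNReal.ofReal (l2norm g) *
        ENNReal.ofReal (l2norm H) := by rw [hg2', hH2', hKdef, mul_assoc]
    _ = ENNReal.ofReal (max 1 I.toReal * l2norm g * l2norm H) := by
        rw [ENNReal.ofReal_mul (mul_nonneg (le_trans zero_le_one (le_max_left _ _)) (l2norm_nonneg g)), ENNReal.ofReal_mul (le_trans zero_le_one (le_max_left _ _))]
    _ = _ := rfl
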